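/- Let q ≠ 0 and r be real numbers. For every nonnegative integer n, B_n^q(r) = ∑_{k=0}^n ∑_{j=0}^k k! W(n,k) W(k,j) ĉ_j^q(−r). -/

import Mathlib

/-- The falling factorial `(x)_k = x(x-1)⋯(x-k+1)`. -/
noncomputable def fallFac (x : ℝ) (k : ℕ) : ℝ := ∏ i ∈ Finset.range k, (x - i)

/-- The generalized falling factorial `(x|q)_k = x(x-q)⋯(x-(k-1)q)`. -/
noncomputable def genFallFac (q x : ℝ) (k : ℕ) : ℝ := ∏ i ∈ Finset.range k, (x - i * q)

/-- The Cauchy polynomials with a `q` parameter of the second kind: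
`ĉ_n^q(z) = ∫_0^1 (−x + z | q)_n dx`. -/
noncomputable def cauchySecond (q z : ℝ) (n : ℕ) : ℝ := ∫ x in (0:ℝ)..1, genFallFac q (-x + z) n

lemma genFallFac_eq (q : ℝ) (hq : q ≠ 0) (x : ℝ) (k : ℕ) :
    genFallFac q x k = q ^ k * fallFac (x / q) k := by
  unfold genFallFac fallFac
  have hp : q ^ k = ∏ _i ∈ Finset.range k, q := by simp
  rw [hp, ← Finset.prod_mul_distrib]
  apply Finset.prod_congr rfl
  intro i _
  field_simp

lemma cont_genFallFac (q r : ℝ) (j : ℕ) :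
    Continuous (fun x : ℝ => genFallFac q (-x + -r) j) := by
  unfold genFallFac
  exact continuous_finset_prod _ fun i _ => by continuity

/-- `B_n^q(r) = ∑_{k=0}^n ∑_{j=0}^k k! W(n,k) W(k,j) ĉ_j^q(−r)`. -/
theorem bernoulli_q_eq_double_sum_cauchySecond (q r : ℝ) (hq : q ≠ 0)
    (W : ℕ → ℕ → ℝ)
    (hW0 : ∀ n k, n < k → W n k = 0)
    (hW : ∀ n : ℕ, ∀ x : ℝ, (q * x + r) ^ n =
      ∑ k ∈ Finset.range (n + 1), q ^ k * W n k * fallFac x k)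
    (B : ℕ → ℝ)
    (hB : ∀ n, B n = ∑ k ∈ Finset.range (n + 1),
      (-1 : ℝ) ^ k * ((k.factorial : ℝ) / ((k : ℝ) + 1)) * W n k)
    (n : ℕ) :
    B n = ∑ k ∈ Finset.range (n + 1), ∑ j ∈ Finset.range (k + 1),
      (k.factorial : ℝ) * W n k * W k j * cauchySecond q (-r) j := by
  have key : ∀ k : ℕ, ∑ j ∈ Finset.range (k + 1), W k j * cauchySecond q (-r) j
      = (-1) ^ k / ((k : ℝ) + 1) := by
    intro k
    have hswap : ∑ j ∈ Finset.range (k + 1), W k j * cauchySecond q (-r) j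
        = ∫ x in (0:ℝ)..1, ∑ j ∈ Finset.range (k + 1), W k j * genFallFac q (-x + -r) j := by
      rw [intervalIntegral.integral_finset_sum]
      · simp only [cauchySecond, intervalIntegral.integral_const_mul]
      · intro j _
        exact (Continuous.intervalIntegrable (by
          have := cont_genFallFac q r j
          fun_prop) 0 1)
    rw [hswap]
    have hint : ∀ x : ℝ, ∑ j ∈ Finset.range (k + 1), W k j * genFallFac q (-x + -r) j
        = (-x) ^ k := by
      intro x
      have h := hW k ((-x + -r) / q)
      have hx : q * ((-x + -r) / q) + r = -x := by field_simp; ring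
      rw [hx] at h
      rw [h]
      apply Finset.sum_congr rfl
      intro j _
      rw [genFallFac_eq q hq]
      ring
    rw [intervalIntegral.integral_congr (fun x _ => hint x)]
    have : ∀ x : ℝ, (-x) ^ k = (-1 : ℝ) ^ k * x ^ k := fun x => by rw [neg_pow]
    rw [intervalIntegral.integral_congr (fun x _ => this x),
      intervalIntegral.integral_const_mul, integral_pow]
    push_cast
    ring
  rw [hB n]
  apply Finset.sum_congr rfl
  intro k _
  have : ∑ j ∈ Finset.range (k + 1), (k.factorial : ℝ) * W n k * W k j * cauchySecond q (-r) j
      = (k.factorial : ℝ) * W n k * ∑ j ∈ Finset.range (k + 1), W k j * cauchySecond q (-r) j := by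
    rw [Finset.mul_sum]
    apply Finset.sum_congr rfl
    intro j _; ring
  rw [this, key k]
  ring
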